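/- Let G be a finite group with generating set X and normal subgroup H, and let T be a right transversal of H in G with 1 ∈ T and every element of T of X-length at most D(G/H). Then diam(G,X) ≤ D(G/H) + (D(G/H) + 1 + max_{t∈T} l_X(t^{-1})) · D(H). -/

import Mathlib

open Subgroup

/-- Minimal length of a word over `X` (positive letters only) representing `g`. -/
noncomputable def wLen {G : Type*} [Group G] (X : Set G) (g : G) : ℕ :=
  sInf {n | ∃ l : List G, (∀ x ∈ l, x ∈ X) ∧ l.length = n ∧ l.prod = g}

/-- Minimal length of a word over `X ∪ X⁻¹` representing `g`. -/
noncomputable def sLen {G : Type*} [Group G] (X : Set G) (g : G) : ℕ :=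
  sInf {n | ∃ l : List G, (∀ x ∈ l, x ∈ X ∨ x⁻¹ ∈ X) ∧ l.length = n ∧ l.prod = g}

/-- Diameter of `G` with respect to `X` (positive words). -/
noncomputable def diamW (G : Type*) [Group G] (X : Set G) : ℕ :=
  sSup (Set.range (wLen X))

/-- Symmetric diameter of `G` with respect to `X`. -/
noncomputable def diamS (G : Type*) [Group G] (X : Set G) : ℕ :=
  sSup (Set.range (sLen X))

/-- Maximum diameter over all generating sets. -/
noncomputable def DW (G : Type*) [Group G] : ℕ :=
  sSup {d | ∃ X : Set G, Subgroup.closure X = ⊤ ∧ d = diamW G X}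

/-- Maximum symmetric diameter over all generating sets. -/
noncomputable def DS (G : Type*) [Group G] : ℕ :=
  sSup {d | ∃ X : Set G, Subgroup.closure X = ⊤ ∧ d = diamS G X}

/-- Minimal size of a generating set of `G`. -/
noncomputable def rk (G : Type*) [Group G] : ℕ :=
  sInf {n | ∃ S : Finset G, S.card = n ∧ Subgroup.closure (S : Set G) = ⊤}

open scoped Pointwise in
/-- In a finite group generated by `X`, every element is a positive word in `X`. -/
lemma wLen_exists {G : Type*} [Group G] [Finite G] {X : Set G}
    (hX : Subgroup.closure X = ⊤) (g : G) :
    ∃ l : List G, (∀ x ∈ l, x ∈ X) ∧ l.prod = g := by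
  have hpow : ∀ (a : G) (n : ℕ), (∃ l : List G, (∀ x ∈ l, x ∈ X) ∧ l.prod = a) →
      ∃ l : List G, (∀ x ∈ l, x ∈ X) ∧ l.prod = a ^ n := by
    intro a n ⟨l, hl, hp⟩
    refine ⟨(List.replicate n l).flatten, ?_, ?_⟩
    · intro x hx
      obtain ⟨l', hl', hx'⟩ := List.mem_flatten.mp hx
      rw [List.eq_of_mem_replicate hl'] at hx'
      exact hl x hx'
    · rw [List.prod_flatten]
      simp [hp, List.prod_replicate]
  let S : Subgroup G :=
    { carrier := {a | ∃ l : List G, (∀ x ∈ l, x ∈ X) ∧ l.prod = a}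
      one_mem' := ⟨[], by simp⟩
      mul_mem' := by
        rintro a b ⟨la, hla, rfl⟩ ⟨lb, hlb, rfl⟩
        exact ⟨la ++ lb, by
          constructor
          · intro x hx
            rcases List.mem_append.mp hx with h | h
            · exact hla x h
            · exact hlb x h
          · simp⟩
      inv_mem' := by
        rintro a ha
        obtain ⟨l, hl, hp⟩ := hpow a (orderOf a - 1) ha
        refine ⟨l, hl, ?_⟩
        rw [hp]
        apply eq_inv_of_mul_eq_one_left
        rw [← pow_succ, Nat.sub_add_cancel (orderOf_pos a), pow_orderOf_eq_one] }
  have : g ∈ S := by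
    have : g ∈ Subgroup.closure X := hX ▸ Subgroup.mem_top g
    exact Subgroup.closure_le S |>.mpr (fun x hx => ⟨[x], by simp [hx]⟩) this
  exact this

lemma wLen_spec {G : Type*} [Group G] [Finite G] {X : Set G}
    (hX : Subgroup.closure X = ⊤) (g : G) :
    ∃ l : List G, (∀ x ∈ l, x ∈ X) ∧ l.length = wLen X g ∧ l.prod = g := by
  have hne : {n | ∃ l : List G, (∀ x ∈ l, x ∈ X) ∧ l.length = n ∧ l.prod = g}.Nonempty := by
    obtain ⟨l, hl, hp⟩ := wLen_exists hX g
    exact ⟨l.length, l, hl, rfl, hp⟩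
  exact Nat.sInf_mem hne

lemma wLen_le {G : Type*} [Group G] {X : Set G} {g : G} {l : List G}
    (hl : ∀ x ∈ l, x ∈ X) (hp : l.prod = g) : wLen X g ≤ l.length :=
  Nat.sInf_le ⟨l, hl, rfl, hp⟩

lemma wLen_mul_le {G : Type*} [Group G] [Finite G] {X : Set G}
    (hX : Subgroup.closure X = ⊤) (a b : G) :
    wLen X (a * b) ≤ wLen X a + wLen X b := by
  obtain ⟨la, hla, hlena, hpa⟩ := wLen_spec hX a
  obtain ⟨lb, hlb, hlenb, hpb⟩ := wLen_spec hX b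
  have := wLen_le (g := a * b) (l := la ++ lb) (fun x hx => by
    rcases List.mem_append.mp hx with h | h
    · exact hla x h
    · exact hlb x h) (by simp [hpa, hpb])
  simpa [hlena, hlenb] using this

lemma wLen_le_diamW {G : Type*} [Group G] [Finite G] (X : Set G) (g : G) :
    wLen X g ≤ diamW G X :=
  le_csSup (Set.finite_range _).bddAbove ⟨g, rfl⟩

lemma diamW_le_DW {G : Type*} [Group G] [Finite G] {X : Set G}
    (hX : Subgroup.closure X = ⊤) : diamW G X ≤ DW G := by
  apply le_csSup
  · exact Set.Finite.bddAbove <| (Set.finite_range (diamW G)).subset <| by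
      rintro d ⟨Y, _, rfl⟩; exact ⟨Y, rfl⟩
  · exact ⟨X, hX, rfl⟩

lemma wLen_list_prod_le {G : Type*} [Group G] [Finite G] {X : Set G}
    (hX : Subgroup.closure X = ⊤) (C : ℕ) :
    ∀ (l : List G), (∀ a ∈ l, wLen X a ≤ C) → wLen X l.prod ≤ C * l.length := by
  intro l
  induction l with
  | nil => intro _; simpa using wLen_le (X := X) (g := 1) (l := []) (by simp) (by simp)
  | cons a l ih =>
    intro h
    calc wLen X (a * l.prod) ≤ wLen X a + wLen X l.prod := wLen_mul_le hX a l.prod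
      _ ≤ C + C * l.length := add_le_add (h a (by simp)) (ih fun b hb => h b (by simp [hb]))
      _ = C * (l.length + 1) := by ring

open scoped Pointwise in
set_option maxHeartbeats 1000000 in
theorem stmt15 {G : Type*} [Group G] [Finite G] (X : Set G)
    (hX : Subgroup.closure X = ⊤) (H : Subgroup G) [H.Normal]
    (T : Set G) (h1T : (1 : G) ∈ T)
    (htrans : ∀ g : G, ∃! t, t ∈ T ∧ g * t⁻¹ ∈ H)
    (hlen : ∀ t ∈ T, wLen X t ≤ DW (G ⧸ H)) :
    diamW G X ≤
      DW (G ⧸ H) + (DW (G ⧸ H) + 1 + sSup ((fun t => wLen X t⁻¹) '' T)) * DW ↥H := by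
  classical
  set D := DW (G ⧸ H) with hD
  set M := sSup ((fun t => wLen X t⁻¹) '' T) with hM
  set K := DW ↥H with hK
  have hR : Subgroup.IsComplement (H : Set G) T := by
    rw [Subgroup.isComplement_iff_existsUnique_mul_inv_mem]
    intro g
    obtain ⟨t, ⟨htT, htH⟩, huniq⟩ := htrans g
    exact ⟨⟨t, htT⟩, htH, fun y hy => Subtype.ext (huniq y ⟨y.2, hy⟩)⟩
  set f := Subgroup.IsComplement.toRightFun hR with hf
  -- bound on M-membership
  have hMle : ∀ t ∈ T, wLen X t⁻¹ ≤ M := by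
    intro t ht
    apply le_csSup
    · exact Set.Finite.bddAbove <| Set.Finite.image _ (Set.toFinite T)
    · exact ⟨t, ht, rfl⟩
  -- Schreier generators
  set Y : Set H := (fun g => (⟨g * (f g : G)⁻¹,
      Subgroup.IsComplement.mul_inv_toRightFun_mem hR g⟩ : H)) '' (T * X) with hY
  have hYtop : Subgroup.closure Y = ⊤ :=
    Subgroup.closure_mul_image_eq_top hR h1T hX
  have hYbound : ∀ y ∈ Y, wLen X (y : G) ≤ D + 1 + M := by
    rintro y ⟨g, hg, rfl⟩
    obtain ⟨t, ht, x, hx, rfl⟩ := hg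
    have h1 : wLen X (t * x) ≤ D + 1 := by
      have := wLen_mul_le hX t x
      have hx1 : wLen X x ≤ 1 := wLen_le (l := [x]) (by simpa using hx) (by simp)
      have := le_trans this (add_le_add (hlen t ht) hx1)
      exact this
    have h2 : wLen X ((f (t * x) : G))⁻¹ ≤ M := hMle _ (f (t * x)).2
    calc wLen X (t * x * (f (t * x) : G)⁻¹)
        ≤ wLen X (t * x) + wLen X ((f (t * x) : G))⁻¹ := wLen_mul_le hX _ _
      _ ≤ (D + 1) + M := add_le_add h1 h2
  -- every element of H is a short word
  have hHbound : ∀ h : H, wLen X (h : G) ≤ (D + 1 + M) * K := by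
    intro h
    obtain ⟨l, hl, hlen', hp⟩ := wLen_spec hYtop h
    have hlK : l.length ≤ K := by
      rw [hlen']
      exact (wLen_le_diamW Y h).trans (diamW_le_DW hYtop)
    have hcoe : ((l.map (fun y : H => (y : G))).prod) = (h : G) := by
      rw [← hp]
      exact (List.prod_hom l H.subtype).symm ▸ rfl
    have := wLen_list_prod_le hX (D + 1 + M) (l.map (fun y : H => (y : G))) (by
      intro a ha
      obtain ⟨y, hy, rfl⟩ := List.mem_map.mp ha
      exact hYbound y (hl y hy))
    rw [hcoe, List.length_map] at this
    exact this.trans (Nat.mul_le_mul_left _ hlK)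
  -- main bound
  have hne : (Set.range (wLen X)).Nonempty := ⟨wLen X 1, 1, rfl⟩
  apply csSup_le hne
  rintro _ ⟨g, rfl⟩
  have hdecomp : g = (g * (f g : G)⁻¹) * (f g : G) := by group
  have hH : g * (f g : G)⁻¹ ∈ H := Subgroup.IsComplement.mul_inv_toRightFun_mem hR g
  calc wLen X g = wLen X ((g * (f g : G)⁻¹) * (f g : G)) := by rw [← hdecomp]
    _ ≤ wLen X (g * (f g : G)⁻¹) + wLen X (f g : G) := wLen_mul_le hX _ _
    _ ≤ (D + 1 + M) * K + D :=
        add_le_add (hHbound ⟨_, hH⟩) (hlen _ (f g).2)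
    _ = D + (D + 1 + M) * K := by ring
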